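/- Let X be a medial quandle and k a commutative ring. If u and v are elements of the quandle ring k[X] with u·u = u and v·v = v, then (u·v)·(u·v) = u·v; in particular, the set of idempotents of k[X] together with 0 is closed under the ring multiplication. -/

import Mathlib

noncomputable def qmul {X : Type*} {k : Type*} [CommRing k] (op : X → X → X)
    (f g : X →₀ k) : X →₀ k :=
  f.sum fun x a => g.sum fun y b => Finsupp.single (op x y) (a * b)

section helpers
variable {X : Type*} {k : Type*} [CommRing k] (op : X → X → X)

lemma qmul_zero_left (g : X →₀ k) : qmul op 0 g = 0 := Finsupp.sum_zero_index

lemma qmul_zero_right (f : X →₀ k) : qmul op f 0 = 0 := by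
  simp [qmul]

lemma qmul_add_left (f f' g : X →₀ k) :
    qmul op (f + f') g = qmul op f g + qmul op f' g := by
  classical
  unfold qmul
  apply Finsupp.sum_add_index
  · intro x _; simp
  · intro x _ a a'; simp [add_mul, Finsupp.single_add, Finsupp.sum_add]

lemma qmul_add_right (f g g' : X →₀ k) :
    qmul op f (g + g') = qmul op f g + qmul op f g' := by
  unfold qmul
  rw [← Finsupp.sum_add]
  apply Finsupp.sum_congr
  intro x _
  classical
  apply Finsupp.sum_add_index
  · intro y _; simp
  · intro y _ b b'; simp [mul_add, Finsupp.single_add]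

lemma qmul_single_single (x y : X) (a b : k) :
    qmul op (Finsupp.single x a) (Finsupp.single y b)
      = Finsupp.single (op x y) (a * b) := by
  unfold qmul
  rw [Finsupp.sum_single_index, Finsupp.sum_single_index]
  · simp
  · simp

lemma qmul_exchange
    (hmedial : ∀ x y z w, op (op x y) (op z w) = op (op x z) (op y w))
    (a b c d : X →₀ k) :
    qmul op (qmul op a b) (qmul op c d) = qmul op (qmul op a c) (qmul op b d) := by
  induction a using Finsupp.induction with
  | zero => simp [qmul_zero_left]
  | single_add x r f _ _ iha =>
    simp only [qmul_add_left, qmul_add_right]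
    rw [iha]
    congr 1
    clear iha
    induction b using Finsupp.induction with
    | zero => simp [qmul_zero_left, qmul_zero_right]
    | single_add y s g _ _ ihb =>
      simp only [qmul_add_left, qmul_add_right]
      rw [ihb]
      congr 1
      clear ihb
      induction c using Finsupp.induction with
      | zero => simp [qmul_zero_left, qmul_zero_right]
      | single_add z t h _ _ ihc =>
        simp only [qmul_add_left, qmul_add_right]
        rw [ihc]
        congr 1
        clear ihc
        induction d using Finsupp.induction with
        | zero => simp [qmul_zero_right]
        | single_add w u i _ _ ihd =>
          simp only [qmul_add_left, qmul_add_right]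
          rw [ihd]
          congr 1
          rw [qmul_single_single, qmul_single_single, qmul_single_single,
            qmul_single_single, qmul_single_single, qmul_single_single,
            hmedial]
          congr 1
          ring

end helpers

theorem product_of_idempotents_is_idempotent_of_medial {X : Type*} {k : Type*} [CommRing k]
    (op : X → X → X)
    (hidem : ∀ x, op x x = x)
    (hbij : ∀ y, Function.Bijective (fun x => op x y))
    (hdist : ∀ x y z, op (op x y) z = op (op x z) (op y z))
    (hmedial : ∀ x y z w, op (op x y) (op z w) = op (op x z) (op y w)) :
    (∀ u v : X →₀ k, qmul op u u = u → qmul op v v = v →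
      qmul op (qmul op u v) (qmul op u v) = qmul op u v) ∧
    (∀ u v : X →₀ k,
      u ∈ {u : X →₀ k | u ≠ 0 ∧ qmul op u u = u} ∪ {0} →
      v ∈ {u : X →₀ k | u ≠ 0 ∧ qmul op u u = u} ∪ {0} →
      qmul op u v ∈ {u : X →₀ k | u ≠ 0 ∧ qmul op u u = u} ∪ {0}) := by
  have key : ∀ u v : X →₀ k, qmul op u u = u → qmul op v v = v →
      qmul op (qmul op u v) (qmul op u v) = qmul op u v := by
    intro u v hu hv
    rw [qmul_exchange op hmedial, hu, hv]
  refine ⟨key, ?_⟩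
  intro u v hu hv
  rcases hu with ⟨hu0, hu⟩ | hu
  · rcases hv with ⟨hv0, hv⟩ | hv
    · by_cases h : qmul op u v = 0
      · right; simp [h]
      · left; exact ⟨h, key u v hu hv⟩
    · right; simp_all [qmul_zero_right]
  · right; simp_all [qmul_zero_left]
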